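/- Let N be a finite-dimensional real vector space with a symmetric bilinear form of signature (1, ρ−1), let ω ∈ N with ω·ω > 0, and suppose H, β ∈ N. Define for b = (b₀, b₁, b₂) ∈ ℝ × N × ℝ the quantity Δ^H(b) = (b₁·H)(b₁·ω) − b₀b₂(H·ω), and the map Z(b) = (½ b₀ (ω·ω) − b₂) + i (b₁·ω). Then Δ^H is negative semi-definite on Ker Z, provided H·ω ≥ 0. Consequently, for any ray ℓ ⊆ ℂ, the set Z^{-1}(ℓ) ∩ {Δ^H ≥ 0} is a convex cone. -/

import Mathlib

/-- The quadratic form `Δ^H(b) = (b₁·H)(b₁·ω) − b₀ b₂ (H·ω)` on `ℝ × N × ℝ`. -/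
def DeltaH {N : Type*} [AddCommGroup N] [Module ℝ N]
    (B : N →ₗ[ℝ] N →ₗ[ℝ] ℝ) (ω H : N) (b : ℝ × N × ℝ) : ℝ :=
  B b.2.1 H * B b.2.1 ω - b.1 * b.2.2 * B H ω

/-- The central charge `Z(b) = (½ b₀ (ω·ω) − b₂) + i (b₁·ω)` on `ℝ × N × ℝ`. -/
noncomputable def Zcharge {N : Type*} [AddCommGroup N] [Module ℝ N]
    (B : N →ₗ[ℝ] N →ₗ[ℝ] ℝ) (ω : N) (b : ℝ × N × ℝ) : ℂ :=
  (((1 : ℝ) / 2 * b.1 * B ω ω - b.2.2 : ℝ) : ℂ) + Complex.I * ((B b.2.1 ω : ℝ) : ℂ)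

section Aux

variable {N : Type*} [AddCommGroup N] [Module ℝ N]
  (B : N →ₗ[ℝ] N →ₗ[ℝ] ℝ) (ω H : N)

/-- Twice the polarization (mixed term) of `DeltaH`. -/
def qmix (u v : ℝ × N × ℝ) : ℝ :=
  B u.2.1 H * B v.2.1 ω + B v.2.1 H * B u.2.1 ω
    - (u.1 * v.2.2 + v.1 * u.2.2) * B H ω

lemma delta_comb (x y : ℝ) (u v : ℝ × N × ℝ) :
    DeltaH B ω H (x • u + y • v)
      = x ^ 2 * DeltaH B ω H u + x * y * qmix B ω H u v + y ^ 2 * DeltaH B ω H v := by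
  simp only [DeltaH, qmix, Prod.fst_add, Prod.snd_add, Prod.smul_fst, Prod.smul_snd,
    map_add, map_smul, LinearMap.add_apply, LinearMap.smul_apply, smul_eq_mul]
  ring

lemma qmix_right (x : ℝ) (u k : ℝ × N × ℝ) :
    qmix B ω H u (x • u + k)
      = 2 * x * DeltaH B ω H u + qmix B ω H u k := by
  simp only [DeltaH, qmix, Prod.fst_add, Prod.snd_add, Prod.smul_fst, Prod.smul_snd,
    map_add, map_smul, LinearMap.add_apply, LinearMap.smul_apply, smul_eq_mul]
  ring

lemma Z_comb (x y : ℝ) (u v : ℝ × N × ℝ) :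
    Zcharge B ω (x • u + y • v)
      = (x : ℂ) * Zcharge B ω u + (y : ℂ) * Zcharge B ω v := by
  simp only [Zcharge, Prod.fst_add, Prod.snd_add, Prod.smul_fst, Prod.smul_snd,
    map_add, map_smul, LinearMap.add_apply, LinearMap.smul_apply, smul_eq_mul]
  push_cast
  ring

lemma Z_smul (x : ℝ) (u : ℝ × N × ℝ) :
    Zcharge B ω (x • u) = (x : ℂ) * Zcharge B ω u := by
  simp only [Zcharge, Prod.smul_fst, Prod.smul_snd, map_smul,
    LinearMap.smul_apply, smul_eq_mul]
  push_cast
  ring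

lemma delta_smul (x : ℝ) (u : ℝ × N × ℝ) :
    DeltaH B ω H (x • u) = x ^ 2 * DeltaH B ω H u := by
  simp only [DeltaH, Prod.smul_fst, Prod.smul_snd, map_smul,
    LinearMap.smul_apply, smul_eq_mul]
  ring

lemma delta_ker (hω : 0 < B ω ω) (hHω : 0 ≤ B H ω) (b : ℝ × N × ℝ)
    (h : Zcharge B ω b = 0) : DeltaH B ω H b ≤ 0 := by
  rw [Complex.ext_iff] at h
  simp only [Zcharge, Complex.add_re, Complex.ofReal_re, Complex.mul_re, Complex.I_re,
    Complex.ofReal_im, Complex.I_im, Complex.add_im, Complex.mul_im, Complex.zero_re,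
    Complex.zero_im] at h
  obtain ⟨h1, h2⟩ := h
  have h2' : B b.2.1 ω = 0 := by linarith
  have h1' : b.2.2 = 1 / 2 * b.1 * B ω ω := by linarith
  have : DeltaH B ω H b = -(1 / 2 * b.1 ^ 2 * B ω ω * B H ω) := by
    simp only [DeltaH, h2', h1']; ring
  rw [this]
  nlinarith [sq_nonneg b.1, mul_nonneg (mul_nonneg (sq_nonneg b.1) hω.le) hHω]

end Aux

/-- With `ω·ω > 0`, `H·ω ≥ 0`, and the Hodge-index property
(`D·ω = 0 → D·D ≤ 0`), the form `Δ^H` is negative semi-definite on `Ker Z`; consequently,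
for any ray `ℓ = ℝ_{>0} z ⊆ ℂ`, the set `Z⁻¹(ℓ) ∩ {Δ^H ≥ 0}` is a convex cone. -/
theorem stmt12 {N : Type*} [AddCommGroup N] [Module ℝ N] [FiniteDimensional ℝ N]
    (B : N →ₗ[ℝ] N →ₗ[ℝ] ℝ) (hsymm : ∀ a b : N, B a b = B b a)
    (ω H : N) (hω : 0 < B ω ω) (hHω : 0 ≤ B H ω)
    (hneg : ∀ D : N, B D ω = 0 → B D D ≤ 0) :
    (∀ b : ℝ × N × ℝ, Zcharge B ω b = 0 → DeltaH B ω H b ≤ 0) ∧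
    ∀ z : ℂ, z ≠ 0 →
      Convex ℝ {b : ℝ × N × ℝ |
          (∃ r : ℝ, 0 < r ∧ Zcharge B ω b = (r : ℂ) * z) ∧ 0 ≤ DeltaH B ω H b} ∧
      ∀ r : ℝ, 0 < r → ∀ b ∈ {b : ℝ × N × ℝ |
          (∃ r' : ℝ, 0 < r' ∧ Zcharge B ω b = (r' : ℂ) * z) ∧ 0 ≤ DeltaH B ω H b},
        r • b ∈ {b : ℝ × N × ℝ |
          (∃ r' : ℝ, 0 < r' ∧ Zcharge B ω b = (r' : ℂ) * z) ∧ 0 ≤ DeltaH B ω H b} := by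
  refine ⟨fun b hb => delta_ker B ω H hω hHω b hb, fun z hz => ⟨?_, ?_⟩⟩
  · -- convexity
    rintro u ⟨⟨r, hr, hZu⟩, hΔu⟩ v ⟨⟨r', hr', hZv⟩, hΔv⟩ a c ha hc hac
    have hrne : (r : ℂ) ≠ 0 := by exact_mod_cast hr.ne'
    set s : ℝ := r' / r with hs
    have hspos : 0 < s := div_pos hr' hr
    set k : ℝ × N × ℝ := v - s • u with hk
    have hvk : v = s • u + (1 : ℝ) • k := by simp [hk]
    have hZk : Zcharge B ω k = 0 := by
      have : k = (1 : ℝ) • v + (-s) • u := by simp [hk]; abel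
      rw [this, Z_comb, hZu, hZv]
      push_cast
      field_simp [hs]
      have hsr : (s : ℂ) * r = r' := by rw [hs]; push_cast; exact div_mul_cancel₀ _ hrne
      linear_combination (-z) * hsr
    have hΔk : DeltaH B ω H k ≤ 0 := delta_ker B ω H hω hHω k hZk
    -- expand Δ v
    have hΔv' : DeltaH B ω H v
        = s ^ 2 * DeltaH B ω H u + s * qmix B ω H u k + DeltaH B ω H k := by
      rw [hvk, delta_comb]; ring
    have hquk : -(s * DeltaH B ω H u) ≤ qmix B ω H u k := by
      nlinarith [hΔv, hΔk, hΔv', sq_nonneg s, hspos, mul_pos hspos hspos]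
    have hquv : 0 ≤ qmix B ω H u v := by
      have : qmix B ω H u v = 2 * s * DeltaH B ω H u + qmix B ω H u k := by
        rw [hvk]
        simpa using qmix_right B ω H s u ((1:ℝ) • k)
      nlinarith
    constructor
    · refine ⟨a * r + c * r', ?_, ?_⟩
      · have hm : 0 < min r r' := lt_min hr hr'
        nlinarith [mul_le_mul_of_nonneg_left (min_le_left r r') ha,
          mul_le_mul_of_nonneg_left (min_le_right r r') hc]
      · rw [Z_comb, hZu, hZv]
        push_cast
        ring
    · rw [delta_comb]
      nlinarith [mul_nonneg ha hc, sq_nonneg a, sq_nonneg c,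
        mul_nonneg (sq_nonneg a) hΔu, mul_nonneg (sq_nonneg c) hΔv,
        mul_nonneg (mul_nonneg ha hc) hquv]
  · -- cone
    rintro r hr b ⟨⟨r', hr', hZb⟩, hΔb⟩
    refine ⟨⟨r * r', mul_pos hr hr', ?_⟩, ?_⟩
    · rw [Z_smul, hZb]; push_cast; ring
    · rw [delta_smul]
      positivity
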